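/- Let Φ be a quantum channel (completely positive trace-preserving map) on H_n that acts on at most k qudits, i.e., there exists I ⊆ [n] with |I| ≤ k such that Φ = Φ_I ⊗ id for a channel Φ_I on the qudits in I. Then for any quantum state ρ ∈ S_n, ‖Φ(ρ) − ρ‖_{W1} ≤ 2k · (d² − 1)/d². -/

import Mathlib

open scoped BigOperators
open scoped Classical
open scoped ComplexOrder

noncomputable section

namespace QW1

/-- Configurations of `n` qudits of local dimension `d`:
the index set of the canonical basis of `(ℂ^d)^{⊗ n}`. -/
abbrev Cfg (d n : ℕ) : Type := Fin n → Fin d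

/-- Linear operators on the Hilbert space of `n` qudits, represented as matrices
in the canonical basis. -/
abbrev Mat (d n : ℕ) : Type := Matrix (Cfg d n) (Cfg d n) ℂ

/-- The trace norm `‖A‖₁ = Tr √(Aᴴ A)`. -/
noncomputable def traceNorm {ι : Type} [Fintype ι] [DecidableEq ι] (A : Matrix ι ι ℂ) : ℝ :=
  (((Matrix.posSemidef_conjTranspose_mul_self A).1.eigenvectorUnitary.1 *
      Matrix.diagonal (((↑) : ℝ → ℂ) ∘ (√·) ∘ (Matrix.posSemidef_conjTranspose_mul_self A).1.eigenvalues) *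
      (star (Matrix.posSemidef_conjTranspose_mul_self A).1.eigenvectorUnitary :
        Matrix ι ι ℂ)).trace).re

/-- The operator norm `‖A‖_∞`. -/
noncomputable def opNorm {ι : Type} [Fintype ι] [DecidableEq ι] (A : Matrix ι ι ℂ) : ℝ :=
  ‖Matrix.toEuclideanCLM (𝕜 := ℂ) A‖

/-- Quantum states: positive semidefinite operators with unit trace. -/
def IsState {ι : Type} [Fintype ι] (ρ : Matrix ι ι ℂ) : Prop :=
  ρ.PosSemidef ∧ ρ.trace = 1

/-- Insert the value `s` at position `i` into a configuration `a` of the remaining qudits. -/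
def ins {d n : ℕ} (i : Fin n) (a : {j : Fin n // j ≠ i} → Fin d) (s : Fin d) : Cfg d n :=
  fun j => if h : j = i then s else a ⟨j, h⟩

/-- The partial trace over the `i`-th qudit. -/
noncomputable def ptrace {d n : ℕ} (i : Fin n) (X : Mat d n) :
    Matrix ({j : Fin n // j ≠ i} → Fin d) ({j : Fin n // j ≠ i} → Fin d) ℂ :=
  fun a b => ∑ s : Fin d, X (ins i a s) (ins i b s)

/-- The marginal of `ρ` on the `i`-th qudit (partial trace over all the other qudits). -/
noncomputable def marginal {d n : ℕ} (i : Fin n) (ρ : Mat d n) :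
    Matrix (Fin d) (Fin d) ℂ :=
  fun s t => ∑ a : ({j : Fin n // j ≠ i} → Fin d), ρ (ins i a s) (ins i a t)

/-- Combine a configuration `s` of the qudits in `I` with a configuration `a` of the rest. -/
def insSet {d n : ℕ} (I : Finset (Fin n)) (a : {j : Fin n // j ∉ I} → Fin d)
    (s : {j : Fin n // j ∈ I} → Fin d) : Cfg d n :=
  fun j => if h : j ∈ I then s ⟨j, h⟩ else a ⟨j, h⟩

/-- The partial trace over the qudits in `I`. -/
noncomputable def ptraceSet {d n : ℕ} (I : Finset (Fin n)) (X : Mat d n) :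
    Matrix ({j : Fin n // j ∉ I} → Fin d) ({j : Fin n // j ∉ I} → Fin d) ℂ :=
  fun a b => ∑ s : ({j : Fin n // j ∈ I} → Fin d), X (insSet I a s) (insSet I b s)

/-- The set of values `(1/2) ∑ i ‖X⁽ⁱ⁾‖₁` over all decompositions `X = ∑ i X⁽ⁱ⁾` with
`X⁽ⁱ⁾` self-adjoint and `Tr_i X⁽ⁱ⁾ = 0`. -/
def W1Set {d n : ℕ} (X : Mat d n) : Set ℝ :=
  { r | ∃ Y : Fin n → Mat d n, (∀ i, (Y i).IsHermitian) ∧ (∀ i, ptrace i (Y i) = 0) ∧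
      X = ∑ i, Y i ∧ r = (1 / 2) * ∑ i, traceNorm (Y i) }

/-- The quantum `W₁` norm. -/
noncomputable def W1 {d n : ℕ} (X : Mat d n) : ℝ := sInf (W1Set X)

/-- The quantum Lipschitz constant: the dual norm of the quantum `W₁` norm. -/
noncomputable def lipschitz {d n : ℕ} (H : Mat d n) : ℝ :=
  sSup { r | ∃ X : Mat d n, X.IsHermitian ∧ X.trace = 0 ∧ W1 X ≤ 1 ∧
    r = ((H * X).trace).re }

/-- Extension `Φ ⊗ id_R` of a map on matrices. -/
def extendMap {A B R : Type} [Fintype A] [Fintype B] [Fintype R]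
    (Φ : Matrix A A ℂ → Matrix B B ℂ) (M : Matrix (A × R) (A × R) ℂ) :
    Matrix (B × R) (B × R) ℂ :=
  fun p q => Φ (fun a a' => M (a, p.2) (a', q.2)) p.1 q.1

/-- Quantum channels: completely positive trace-preserving linear maps. -/
def IsCPTP {A B : Type} [Fintype A] [Fintype B]
    (Φ : Matrix A A ℂ →ₗ[ℂ] Matrix B B ℂ) : Prop :=
  (∀ (k : ℕ) (M : Matrix (A × Fin k) (A × Fin k) ℂ), M.PosSemidef →
    (extendMap (fun N => Φ N) M).PosSemidef) ∧
  ∀ M, (Φ M).trace = M.trace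

/-- Action `φ_i ⊗ id` of a single-qudit map `φ` on the `i`-th qudit of `n` qudits. -/
def applyAt {d n : ℕ} (i : Fin n) (φ : Matrix (Fin d) (Fin d) ℂ → Matrix (Fin d) (Fin d) ℂ)
    (X : Mat d n) : Mat d n :=
  fun a b => φ (fun s t => X (Function.update a i s) (Function.update b i t)) (a i) (b i)

/-- Action `φ_I ⊗ id` of a map `φ` on the qudits in `I`. -/
def applyOn {d n : ℕ} (I : Finset (Fin n))
    (φ : Matrix ({j : Fin n // j ∈ I} → Fin d) ({j : Fin n // j ∈ I} → Fin d) ℂ →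
         Matrix ({j : Fin n // j ∈ I} → Fin d) ({j : Fin n // j ∈ I} → Fin d) ℂ)
    (X : Mat d n) : Mat d n :=
  fun a b =>
    φ (fun s t => X (insSet I (fun j => a j) s) (insSet I (fun j => b j) t))
      (fun j => a j) (fun j => b j)

/-- The operator obtained from `X` by permuting the tensor factors according to `π`. -/
def permuteMat {d n : ℕ} (π : Equiv.Perm (Fin n)) (X : Mat d n) : Mat d n :=
  fun a b => X (a ∘ π) (b ∘ π)

/-- Tensor product of an operator on the first `m` qudits with one on the last `n` qudits. -/
def tensorMN {d m n : ℕ} (A : Mat d m) (B : Mat d n) : Mat d (m + n) :=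
  fun a b =>
    A (fun i => a (Fin.castAdd n i)) (fun i => b (Fin.castAdd n i)) *
    B (fun j => a (Fin.natAdd m j)) (fun j => b (Fin.natAdd m j))

/-- Partial trace of an operator on `m + n` qudits over the last `n` qudits. -/
noncomputable def ptraceLast {d m n : ℕ} (X : Mat d (m + n)) : Mat d m :=
  fun a b => ∑ k : Cfg d n, X (Fin.append a k) (Fin.append b k)

/-- Partial trace of an operator on `m + n` qudits over the first `m` qudits. -/
noncomputable def ptraceFirst {d m n : ℕ} (X : Mat d (m + n)) : Mat d n :=
  fun a b => ∑ k : Cfg d m, X (Fin.append k a) (Fin.append k b)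

/-- `n`-fold tensor product `σ₁ ⊗ ⋯ ⊗ σₙ` of single-qudit operators. -/
def tensorAll {d n : ℕ} (σs : Fin n → Matrix (Fin d) (Fin d) ℂ) : Mat d n :=
  fun a b => ∏ i, σs i (a i) (b i)

/-- `I_d^{(i)} ⊗ K`: the identity on the `i`-th qudit tensored with an operator `K`
on the remaining qudits. -/
def idTensorAt {d n : ℕ} (i : Fin n)
    (K : Matrix ({j : Fin n // j ≠ i} → Fin d) ({j : Fin n // j ≠ i} → Fin d) ℂ) :
    Mat d n :=
  fun a b => if a i = b i then K (fun j => a j) (fun j => b j) else 0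

/-- `K ⊗ identity`: an operator acting only on the qudits in `I`. -/
def embedOn {d n : ℕ} (I : Finset (Fin n))
    (K : Matrix ({j : Fin n // j ∈ I} → Fin d) ({j : Fin n // j ∈ I} → Fin d) ℂ) :
    Mat d n :=
  fun a b => if (∀ j, j ∉ I → a j = b j) then K (fun j => a j) (fun j => b j) else 0

/-- The `n`-th tensor power `φ^{⊗n}` of a single-qudit linear map `φ`. -/
noncomputable def tensorPowMap {d n : ℕ}
    (φ : Matrix (Fin d) (Fin d) ℂ → Matrix (Fin d) (Fin d) ℂ) (X : Mat d n) : Mat d n :=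
  fun a b => ∑ s : Cfg d n, ∑ t : Cfg d n,
    X s t * ∏ j, φ (Matrix.single (s j) (t j) 1) (a j) (b j)

/-- The `1 → 1` norm of a map on single-qudit operators. -/
noncomputable def norm1to1 {d : ℕ}
    (F : Matrix (Fin d) (Fin d) ℂ → Matrix (Fin d) (Fin d) ℂ) : ℝ :=
  sSup { r | ∃ ρ : Matrix (Fin d) (Fin d) ℂ, IsState ρ ∧ r = traceNorm (F ρ) }

/-- The diamond norm of a map on single-qudit operators. -/
noncomputable def diamondNorm {d : ℕ}
    (F : Matrix (Fin d) (Fin d) ℂ → Matrix (Fin d) (Fin d) ℂ) : ℝ :=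
  sSup { r | ∃ ρ : Matrix (Fin d × Fin d) (Fin d × Fin d) ℂ, IsState ρ ∧
    r = traceNorm (extendMap F ρ) }

/-- The contraction coefficient (`W₁ → W₁` norm) of a map on `n`-qudit operators. -/
noncomputable def W1toW1 {d n : ℕ} (Φ : Mat d n → Mat d n) : ℝ :=
  sSup { r | ∃ X : Mat d n, X.IsHermitian ∧ X.trace = 0 ∧ W1 X ≤ 1 ∧ r = W1 (Φ X) }

/-- The von Neumann entropy `S(ρ) = -Tr[ρ ln ρ]` (natural logarithm). -/
noncomputable def vnEntropy {ι : Type} [Fintype ι] [DecidableEq ι] (ρ : Matrix ι ι ℂ) : ℝ :=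
  if h : ρ.IsHermitian then -∑ i, h.eigenvalues i * Real.log (h.eigenvalues i) else 0

/-- The logarithm of a self-adjoint matrix, via the spectral decomposition. -/
noncomputable def matLog {ι : Type} [Fintype ι] [DecidableEq ι] (ρ : Matrix ι ι ℂ) :
    Matrix ι ι ℂ :=
  if h : ρ.IsHermitian then
    (h.eigenvectorUnitary : Matrix ι ι ℂ) *
      Matrix.diagonal (fun i => (Real.log (h.eigenvalues i) : ℂ)) *
      (star (h.eigenvectorUnitary : Matrix ι ι ℂ))
  else 0

/-- The quantum relative entropy `S(ρ‖σ) = Tr[ρ (ln ρ - ln σ)]`. -/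
noncomputable def relEntropy {ι : Type} [Fintype ι] [DecidableEq ι]
    (ρ σ : Matrix ι ι ℂ) : ℝ :=
  ((ρ * (matLog ρ - matLog σ)).trace).re

/-- The Hamming distance between two configurations. -/
def hamming {d n : ℕ} (x y : Cfg d n) : ℕ :=
  (Finset.univ.filter (fun i => x i ≠ y i)).card

/-- Probability distributions on a finite set. -/
def IsProb {α : Type} [Fintype α] (p : α → ℝ) : Prop :=
  (∀ x, 0 ≤ p x) ∧ ∑ x, p x = 1

/-- Couplings of two probability distributions. -/
def IsCoupling {α : Type} [Fintype α] (π : α × α → ℝ) (p q : α → ℝ) : Prop :=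
  IsProb π ∧ (∀ x, ∑ y, π (x, y) = p x) ∧ (∀ y, ∑ x, π (x, y) = q y)

/-- The classical Wasserstein distance of order 1 with respect to the Hamming distance. -/
noncomputable def classicalW1 {d n : ℕ} (p q : Cfg d n → ℝ) : ℝ :=
  sInf { c | ∃ π : Cfg d n × Cfg d n → ℝ, IsCoupling π p q ∧
    c = ∑ x : Cfg d n, ∑ y : Cfg d n, (hamming x y : ℝ) * π (x, y) }

/-- The Lipschitz constant of a function on `[d]^n` with respect to the Hamming distance. -/
noncomputable def classicalLip {d n : ℕ} (f : Cfg d n → ℝ) : ℝ :=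
  sSup { r | ∃ x y : Cfg d n, x ≠ y ∧ r = |f x - f y| / (hamming x y : ℝ) }



section AuxProofs
open Matrix

variable {ι : Type} [Fintype ι] [DecidableEq ι]

lemma traceNorm_eq_cfc (A : Matrix ι ι ℂ) :
    traceNorm A = (cfc Real.sqrt (Aᴴ * A)).trace.re := by
  rw [(Matrix.posSemidef_conjTranspose_mul_self A).1.cfc_eq, Matrix.IsHermitian.cfc,
    Unitary.conjStarAlgAut_apply]
  rfl

lemma traceNorm_eq_of_sq {A B : Matrix ι ι ℂ} (hB : B.PosSemidef)
    (h : B ^ 2 = Aᴴ * A) : traceNorm A = B.trace.re := by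
  rw [traceNorm_eq_cfc, ← h]
  have hBsa : IsSelfAdjoint B := hB.1
  rw [← cfc_pow_id (R := ℝ) B 2 hBsa, ← cfc_comp Real.sqrt (fun x => x ^ 2) B hBsa]
  congr 2
  conv_rhs => rw [← cfc_id ℝ B hBsa]
  apply cfc_congr
  intro x hx
  obtain ⟨i, rfl⟩ := hB.1.spectrum_real_eq_range_eigenvalues ▸ hx
  simp only [Function.comp_apply, id]
  exact Real.sqrt_sq (hB.eigenvalues_nonneg i)

lemma conj_sandwich_mul {U : Matrix ι ι ℂ} (hU1 : star U * U = 1) (X Y : Matrix ι ι ℂ) :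
    (U * X * star U) * (U * Y * star U) = U * (X * Y) * star U := by
  rw [mul_assoc, mul_assoc, mul_assoc, ← mul_assoc (star U), hU1, one_mul]
  simp [mul_assoc]

/-- For Hermitian `A`, `traceNorm A = ∑ |eigenvalues|`. -/
lemma traceNorm_eq_sum_abs {A : Matrix ι ι ℂ} (hA : A.IsHermitian) :
    traceNorm A = ∑ i, |hA.eigenvalues i| := by
  classical
  set U : Matrix ι ι ℂ := (Matrix.IsHermitian.eigenvectorUnitary hA : Matrix ι ι ℂ) with hUdef
  have hU1 : star U * U = 1 := (Matrix.IsHermitian.eigenvectorUnitary hA).2.1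
  set D : Matrix ι ι ℂ := Matrix.diagonal (fun i => (hA.eigenvalues i : ℂ)) with hD
  have hspec : A = U * D * star U := by
    simpa [hUdef, hD, Function.comp_def] using hA.spectral_theorem
  set B : Matrix ι ι ℂ := U * Matrix.diagonal (fun i => ((|hA.eigenvalues i| : ℝ) : ℂ)) * star U with hB
  have hBpsd : B.PosSemidef := by
    have : (Matrix.diagonal (fun i => ((|hA.eigenvalues i| : ℝ) : ℂ))).PosSemidef := by
      rw [Matrix.posSemidef_diagonal_iff]
      intro i
      exact_mod_cast abs_nonneg _
    simpa [hB, Matrix.star_eq_conjTranspose] using this.mul_mul_conjTranspose_same U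
  have hsq : B ^ 2 = Aᴴ * A := by
    have hAA : Aᴴ * A = A * A := by rw [hA.eq]
    rw [pow_two, hAA, hspec, hB, conj_sandwich_mul hU1, conj_sandwich_mul hU1]
    congr 2
    rw [Matrix.diagonal_mul_diagonal, Matrix.diagonal_mul_diagonal]
    refine congrArg Matrix.diagonal (funext fun i => ?_)
    norm_cast
    rw [abs_mul_abs_self]
  rw [traceNorm_eq_of_sq hBpsd hsq, hB]
  rw [Matrix.trace_mul_cycle, hU1, one_mul, Matrix.trace_diagonal]
  simp

lemma trace_re_eq_sum_eigenvalues {A : Matrix ι ι ℂ} (hA : A.IsHermitian) :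
    A.trace.re = ∑ i, hA.eigenvalues i := by
  classical
  have hU1 : star (Matrix.IsHermitian.eigenvectorUnitary hA : Matrix ι ι ℂ) *
      (Matrix.IsHermitian.eigenvectorUnitary hA : Matrix ι ι ℂ) = 1 :=
    (Matrix.IsHermitian.eigenvectorUnitary hA).2.1
  rw [show A.trace = ∑ i, (hA.eigenvalues i : ℂ) from by
    conv_lhs => rw [hA.spectral_theorem]
    rw [Unitary.conjStarAlgAut_apply, Matrix.trace_mul_cycle, hU1, one_mul, Matrix.trace_diagonal]
    simp [Function.comp]]
  simp


lemma psd_diag_nonneg {M : Matrix ι ι ℂ} (hM : M.PosSemidef) (i : ι) : 0 ≤ M i i := by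
  have h := hM.dotProduct_mulVec_nonneg (Pi.single i 1)
  simpa [dotProduct, Pi.single_apply, apply_ite] using h

lemma psd_diag_re_nonneg {M : Matrix ι ι ℂ} (hM : M.PosSemidef) (i : ι) : 0 ≤ (M i i).re :=
  (Complex.le_def.mp (psd_diag_nonneg hM i)).1

/-- duality upper bound -/
lemma re_trace_mul_le_traceNorm {Z W : Matrix ι ι ℂ} (hZ : Z.IsHermitian)
    (hW1 : (1 - W).PosSemidef) (hW2 : (1 + W).PosSemidef) :
    ((W * Z).trace).re ≤ traceNorm Z := by
  classical
  set U : Matrix ι ι ℂ := (Matrix.IsHermitian.eigenvectorUnitary hZ : Matrix ι ι ℂ) with hUdef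
  have hU1 : star U * U = 1 := (Matrix.IsHermitian.eigenvectorUnitary hZ).2.1
  have hU2 : U * star U = 1 := (Matrix.IsHermitian.eigenvectorUnitary hZ).2.2
  have hspec : Z = U * Matrix.diagonal (fun i => (hZ.eigenvalues i : ℂ)) * star U := by
    simpa [hUdef, Function.comp_def] using hZ.spectral_theorem
  have key : (W * Z).trace = ∑ i, (star U * W * U) i i * (hZ.eigenvalues i : ℂ) := by
    conv_lhs => rw [hspec]
    rw [show W * (U * Matrix.diagonal (fun i => (hZ.eigenvalues i : ℂ)) * star U)
        = W * U * Matrix.diagonal (fun i => (hZ.eigenvalues i : ℂ)) * star U by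
      simp [mul_assoc]]
    rw [Matrix.trace_mul_cycle]
    rw [show star U * (W * U) * Matrix.diagonal (fun i => (hZ.eigenvalues i : ℂ))
        = (star U * W * U) * Matrix.diagonal (fun i => (hZ.eigenvalues i : ℂ)) by
      simp [mul_assoc]]
    rw [Matrix.trace]
    congr 1
    funext i
    rw [Matrix.diag_apply, Matrix.mul_diagonal]
  have hbound : ∀ i, |((star U * W * U) i i).re| ≤ 1 := by
    intro i
    have h1 : 0 ≤ ((star U * (1 - W) * U) i i).re :=
      psd_diag_re_nonneg (hW1.conjTranspose_mul_mul_same U) i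
    have h2 : 0 ≤ ((star U * (1 + W) * U) i i).re :=
      psd_diag_re_nonneg (hW2.conjTranspose_mul_mul_same U) i
    have e1 : star U * (1 - W) * U = 1 - star U * W * U := by
      rw [mul_sub, sub_mul, mul_one, hU1]
    have e2 : star U * (1 + W) * U = 1 + star U * W * U := by
      rw [mul_add, add_mul, mul_one, hU1]
    rw [e1] at h1; rw [e2] at h2
    simp only [Matrix.sub_apply, Matrix.add_apply, Matrix.one_apply_eq, Complex.sub_re,
      Complex.add_re, Complex.one_re] at h1 h2
    rw [abs_le]; constructor <;> linarith
  rw [key, traceNorm_eq_sum_abs hZ]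
  rw [Complex.re_sum]
  apply Finset.sum_le_sum
  intro i _
  have : ((star U * W * U) i i * (hZ.eigenvalues i : ℂ)).re
      = ((star U * W * U) i i).re * hZ.eigenvalues i := by
    simp [Complex.mul_re]
  rw [this]
  calc ((star U * W * U) i i).re * hZ.eigenvalues i
      ≤ |((star U * W * U) i i).re * hZ.eigenvalues i| := le_abs_self _
    _ = |((star U * W * U) i i).re| * |hZ.eigenvalues i| := abs_mul _ _
    _ ≤ 1 * |hZ.eigenvalues i| := by
        exact mul_le_mul_of_nonneg_right (hbound i) (abs_nonneg _)
    _ = |hZ.eigenvalues i| := one_mul _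

/-- optimal dual witness -/
lemma exists_dual_witness {Z : Matrix ι ι ℂ} (hZ : Z.IsHermitian) :
    ∃ W : Matrix ι ι ℂ, (1 - W).PosSemidef ∧ (1 + W).PosSemidef ∧
      ((W * Z).trace).re = traceNorm Z := by
  classical
  set U : Matrix ι ι ℂ := (Matrix.IsHermitian.eigenvectorUnitary hZ : Matrix ι ι ℂ) with hUdef
  have hU1 : star U * U = 1 := (Matrix.IsHermitian.eigenvectorUnitary hZ).2.1
  have hU2 : U * star U = 1 := (Matrix.IsHermitian.eigenvectorUnitary hZ).2.2
  have hspec : Z = U * Matrix.diagonal (fun i => (hZ.eigenvalues i : ℂ)) * star U := by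
    simpa [hUdef, Function.comp_def] using hZ.spectral_theorem
  set w : ι → ℝ := fun i => if 0 ≤ hZ.eigenvalues i then 1 else -1 with hw
  refine ⟨U * Matrix.diagonal (fun i => (w i : ℂ)) * star U, ?_, ?_, ?_⟩
  · have : (1 : Matrix ι ι ℂ) - U * Matrix.diagonal (fun i => (w i : ℂ)) * star U
        = U * Matrix.diagonal (fun i => ((1 - w i : ℝ) : ℂ)) * star U := by
      rw [show Matrix.diagonal (fun i => ((1 - w i : ℝ) : ℂ))
          = 1 - Matrix.diagonal (fun i => (w i : ℂ)) by
        rw [← Matrix.diagonal_one, Matrix.diagonal_sub]; push_cast; rfl]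
      rw [mul_sub, sub_mul, mul_one, hU2]
    rw [this]
    refine Matrix.PosSemidef.mul_mul_conjTranspose_same ?_ U
    rw [Matrix.posSemidef_diagonal_iff]
    intro i
    have : (0:ℝ) ≤ 1 - w i := by rw [hw]; dsimp only; split <;> norm_num
    exact_mod_cast this
  · have : (1 : Matrix ι ι ℂ) + U * Matrix.diagonal (fun i => (w i : ℂ)) * star U
        = U * Matrix.diagonal (fun i => ((1 + w i : ℝ) : ℂ)) * star U := by
      rw [show Matrix.diagonal (fun i => ((1 + w i : ℝ) : ℂ))
          = 1 + Matrix.diagonal (fun i => (w i : ℂ)) by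
        rw [← Matrix.diagonal_one, Matrix.diagonal_add]; push_cast; rfl]
      rw [mul_add, add_mul, mul_one, hU2]
    rw [this]
    refine Matrix.PosSemidef.mul_mul_conjTranspose_same ?_ U
    rw [Matrix.posSemidef_diagonal_iff]
    intro i
    have : (0:ℝ) ≤ 1 + w i := by rw [hw]; dsimp only; split <;> norm_num
    exact_mod_cast this
  · conv_lhs => rw [hspec]
    rw [show U * Matrix.diagonal (fun i => (w i : ℂ)) * star U *
        (U * Matrix.diagonal (fun i => (hZ.eigenvalues i : ℂ)) * star U)
        = U * (Matrix.diagonal (fun i => (w i : ℂ)) *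
            Matrix.diagonal (fun i => (hZ.eigenvalues i : ℂ))) * star U by
      rw [mul_assoc, mul_assoc, mul_assoc, ← mul_assoc (star U), hU1, one_mul]
      rw [mul_assoc]
      congr 1
      rw [← mul_assoc, Matrix.diagonal_mul_diagonal]]
    rw [Matrix.trace_mul_cycle, ← mul_assoc, hU1, one_mul, Matrix.diagonal_mul_diagonal,
      Matrix.trace_diagonal, traceNorm_eq_sum_abs hZ]
    rw [Complex.re_sum]
    congr 1
    funext i
    rw [show ((w i : ℂ) * (hZ.eigenvalues i : ℂ)) = ((w i * hZ.eigenvalues i : ℝ) : ℂ) by push_cast; ring]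
    rw [Complex.ofReal_re, hw]
    dsimp only
    split
    · rw [one_mul, abs_of_nonneg ‹_›]
    · rw [neg_one_mul, abs_of_neg (by linarith [not_le.mp ‹_›])]

lemma traceNorm_add_le {A B : Matrix ι ι ℂ} (hA : A.IsHermitian) (hB : B.IsHermitian) :
    traceNorm (A + B) ≤ traceNorm A + traceNorm B := by
  obtain ⟨W, h1, h2, h3⟩ := exists_dual_witness (hA.add hB)
  rw [← h3, mul_add, Matrix.trace_add, Complex.add_re]
  exact add_le_add (re_trace_mul_le_traceNorm hA h1 h2) (re_trace_mul_le_traceNorm hB h1 h2)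

lemma traceNorm_le_two_mul_trace {Z P : Matrix ι ι ℂ} (hZ : Z.IsHermitian)
    (hZ0 : Z.trace = 0) (hP : P.PosSemidef) (hPZ : (P - Z).PosSemidef) :
    traceNorm Z ≤ 2 * P.trace.re := by
  classical
  set U : Matrix ι ι ℂ := (Matrix.IsHermitian.eigenvectorUnitary hZ : Matrix ι ι ℂ) with hUdef
  have hU1 : star U * U = 1 := (Matrix.IsHermitian.eigenvectorUnitary hZ).2.1
  have hU2 : U * star U = 1 := (Matrix.IsHermitian.eigenvectorUnitary hZ).2.2
  have hspec : Z = U * Matrix.diagonal (fun i => (hZ.eigenvalues i : ℂ)) * star U := by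
    simpa [hUdef, Function.comp_def] using hZ.spectral_theorem
  have hUZU : star U * Z * U = Matrix.diagonal (fun i => (hZ.eigenvalues i : ℂ)) := by
    conv_lhs => rw [hspec]
    rw [show star U * (U * Matrix.diagonal (fun i => (hZ.eigenvalues i : ℂ)) * star U) * U
        = (star U * U) * Matrix.diagonal (fun i => (hZ.eigenvalues i : ℂ)) * (star U * U) by
      simp [mul_assoc]]
    rw [hU1, one_mul, mul_one]
  set t : ι → ℝ := fun i => ((star U * P * U) i i).re with ht
  have htnn : ∀ i, 0 ≤ t i := fun i => psd_diag_re_nonneg (hP.conjTranspose_mul_mul_same U) i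
  have htge : ∀ i, hZ.eigenvalues i ≤ t i := by
    intro i
    have h0 : 0 ≤ ((star U * (P - Z) * U) i i).re :=
      psd_diag_re_nonneg (hPZ.conjTranspose_mul_mul_same U) i
    have e : star U * (P - Z) * U = star U * P * U - star U * Z * U := by
      rw [mul_sub, sub_mul]
    rw [e, hUZU] at h0
    simp only [Matrix.sub_apply, Complex.sub_re, Matrix.diagonal_apply_eq,
      Complex.ofReal_re] at h0
    linarith
  have hsumt : ∑ i, t i = P.trace.re := by
    rw [ht]
    have : (star U * P * U).trace = P.trace := by
      rw [Matrix.trace_mul_cycle, hU2, one_mul]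
    rw [← this, Matrix.trace, Complex.re_sum]
    rfl
  have hsuml : ∑ i, hZ.eigenvalues i = 0 := by
    rw [← trace_re_eq_sum_eigenvalues hZ, hZ0]; simp
  rw [traceNorm_eq_sum_abs hZ]
  have : ∀ i, |hZ.eigenvalues i| = 2 * max (hZ.eigenvalues i) 0 - hZ.eigenvalues i := by
    intro i
    rcases le_or_gt 0 (hZ.eigenvalues i) with h | h
    · rw [abs_of_nonneg h, max_eq_left h]; ring
    · rw [abs_of_neg h, max_eq_right h.le]; ring
  rw [Finset.sum_congr rfl (fun i _ => this i), Finset.sum_sub_distrib, hsuml, sub_zero,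
    ← Finset.mul_sum]
  have : ∑ i, max (hZ.eigenvalues i) 0 ≤ ∑ i, t i :=
    Finset.sum_le_sum (fun i _ => max_le (htge i) (htnn i))
  rw [hsumt] at this
  linarith

lemma traceNorm_nonneg (A : Matrix ι ι ℂ) : 0 ≤ traceNorm A := by
  unfold traceNorm
  rw [Matrix.trace_mul_cycle, (Matrix.posSemidef_conjTranspose_mul_self A).1.eigenvectorUnitary.2.1,
    one_mul, Matrix.trace_diagonal, Complex.re_sum]
  exact Finset.sum_nonneg fun i _ => by simp [Real.sqrt_nonneg]

lemma traceNorm_zero : traceNorm (0 : Matrix ι ι ℂ) = 0 := by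
  rw [traceNorm_eq_of_sq (A := (0 : Matrix ι ι ℂ)) (B := (0 : Matrix ι ι ℂ))
    Matrix.PosSemidef.zero (by rw [pow_two]; simp)]
  simp

lemma traceNorm_neg (A : Matrix ι ι ℂ) : traceNorm (-A) = traceNorm A := by
  rw [traceNorm_eq_cfc, traceNorm_eq_cfc]
  simp

lemma traceNorm_sub_le {A B : Matrix ι ι ℂ} (hA : A.IsHermitian) (hB : B.IsHermitian) :
    traceNorm (A - B) ≤ traceNorm A + traceNorm B := by
  rw [sub_eq_add_neg]
  calc traceNorm (A + -B) ≤ traceNorm A + traceNorm (-B) := traceNorm_add_le hA hB.neg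
    _ = traceNorm A + traceNorm B := by rw [traceNorm_neg]



variable {d n : ℕ}

def restr {d n : ℕ} (i : Fin n) (x : Cfg d n) : {j : Fin n // j ≠ i} → Fin d := fun j => x j

@[simp] lemma ins_self (i : Fin n) (a : {j : Fin n // j ≠ i} → Fin d) (s : Fin d) :
    ins i a s i = s := by simp [ins]

@[simp] lemma restr_ins (i : Fin n) (a : {j : Fin n // j ≠ i} → Fin d) (s : Fin d) :
    restr i (ins i a s) = a := by
  funext j
  simp [restr, ins, j.prop]

@[simp] lemma ins_restr (i : Fin n) (x : Cfg d n) : ins i (restr i x) (x i) = x := by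
  funext j
  rcases eq_or_ne j i with h | h
  · subst h; simp [ins]
  · simp [ins, restr, h]

def eIns (i : Fin n) : Cfg d n ≃ (Fin d) × ({j : Fin n // j ≠ i} → Fin d) where
  toFun x := (x i, restr i x)
  invFun p := ins i p.2 p.1
  left_inv x := by simp
  right_inv p := by
    cases p with
    | mk s a => simp

lemma sum_cfg_eq (i : Fin n) (f : Cfg d n → ℂ) :
    ∑ x : Cfg d n, f x = ∑ s : Fin d, ∑ a : {j : Fin n // j ≠ i} → Fin d, f (ins i a s) := by
  rw [← Equiv.sum_comp (eIns i).symm f, Fintype.sum_prod_type]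
  rfl

/-- The depolarizing operation at site `i`. -/
noncomputable def DepI (i : Fin n) (X : Mat d n) : Mat d n :=
  ((d : ℂ))⁻¹ • idTensorAt i (ptrace i X)

lemma DepI_apply (i : Fin n) (X : Mat d n) (a b : Cfg d n) :
    DepI i X a b = ((d:ℂ))⁻¹ * (if a i = b i then ptrace i X (restr i a) (restr i b) else 0) := by
  rfl

lemma trace_ptrace (i : Fin n) (X : Mat d n) : (ptrace i X).trace = X.trace := by
  rw [Matrix.trace, Matrix.trace]
  rw [show (∑ x : Cfg d n, X.diag x) = ∑ s : Fin d, ∑ a : {j : Fin n // j ≠ i} → Fin d,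
      X (ins i a s) (ins i a s) from sum_cfg_eq i _]
  rw [Finset.sum_comm]
  simp [ptrace, Matrix.diag]

lemma trace_DepI (hd : d ≠ 0) (i : Fin n) (X : Mat d n) : (DepI i X).trace = X.trace := by
  have : (idTensorAt i (ptrace i X)).trace = (d : ℂ) * X.trace := by
    rw [Matrix.trace]
    rw [show (∑ x : Cfg d n, (idTensorAt i (ptrace i X)).diag x)
        = ∑ s : Fin d, ∑ a : {j : Fin n // j ≠ i} → Fin d,
          (idTensorAt i (ptrace i X)) (ins i a s) (ins i a s) from sum_cfg_eq i _]
    have : ∀ (s : Fin d) (a : {j : Fin n // j ≠ i} → Fin d),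
        (idTensorAt i (ptrace i X)) (ins i a s) (ins i a s) = (ptrace i X) a a := by
      intro s a
      show (if (ins i a s) i = (ins i a s) i then
        ptrace i X (restr i (ins i a s)) (restr i (ins i a s)) else 0) = _
      rw [if_pos rfl, restr_ins]
    simp only [this]
    rw [Finset.sum_const, ← trace_ptrace i X, Matrix.trace]
    simp [Matrix.diag, mul_comm]
  rw [DepI, Matrix.trace_smul, this]
  rw [smul_eq_mul, ← mul_assoc, inv_mul_cancel₀ (by exact_mod_cast hd), one_mul]

lemma ptrace_DepI (hd : d ≠ 0) (i : Fin n) (X : Mat d n) :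
    ptrace i (DepI i X) = ptrace i X := by
  funext a b
  rw [ptrace]
  have : ∀ s : Fin d, DepI i X (ins i a s) (ins i b s) = ((d:ℂ))⁻¹ * ptrace i X a b := by
    intro s
    rw [DepI_apply]
    simp [restr_ins]
  simp only [this]
  rw [Finset.sum_const]
  simp only [Finset.card_univ, Fintype.card_fin, nsmul_eq_mul]
  rw [← mul_assoc, mul_inv_cancel₀ (by exact_mod_cast hd), one_mul]

lemma herm_entry {ι : Type} [Fintype ι] {M : Matrix ι ι ℂ} (h : M.IsHermitian) (p q : ι) :
    star (M p q) = M q p := by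
  conv_rhs => rw [← h.eq]
  rw [Matrix.conjTranspose_apply]

lemma ptrace_isHermitian {i : Fin n} {X : Mat d n} (hX : X.IsHermitian) :
    (ptrace i X).IsHermitian := by
  rw [Matrix.IsHermitian]
  funext a b
  rw [Matrix.conjTranspose_apply, ptrace, ptrace, star_sum]
  congr 1
  funext s
  exact herm_entry hX _ _

lemma DepI_isHermitian {i : Fin n} {X : Mat d n} (hX : X.IsHermitian) :
    (DepI i X).IsHermitian := by
  have hpt := ptrace_isHermitian (i := i) hX
  rw [Matrix.IsHermitian]
  funext a b
  rw [Matrix.conjTranspose_apply, DepI_apply, DepI_apply]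
  rw [star_mul']
  congr 1
  · simp
  · rcases eq_or_ne (a i) (b i) with h | h
    · rw [if_pos h, if_pos h.symm]
      exact herm_entry hpt _ _
    · rw [if_neg h, if_neg (Ne.symm h)]
      simp

lemma ptrace_sub (i : Fin n) (X Y : Mat d n) :
    ptrace i (X - Y) = ptrace i X - ptrace i Y := by
  funext a b
  simp [ptrace, Finset.sum_sub_distrib]

/-- rank-one matrix `x xᴴ`. -/
def outer {d n : ℕ} (x : Cfg d n → ℂ) : Mat d n := fun a b => x a * (starRingEnd ℂ) (x b)

lemma psd_add {ι : Type} [Fintype ι] {M N : Matrix ι ι ℂ} (hM : M.PosSemidef)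
    (hN : N.PosSemidef) : (M + N).PosSemidef := by
  refine Matrix.PosSemidef.of_dotProduct_mulVec_nonneg (hM.1.add hN.1) fun v => ?_
  rw [Matrix.add_mulVec, dotProduct_add]
  exact add_nonneg (hM.dotProduct_mulVec_nonneg v) (hN.dotProduct_mulVec_nonneg v)

lemma sum_mulVec' {ι κ : Type} [Fintype ι] [Fintype κ] (M : κ → Matrix ι ι ℂ) (v : ι → ℂ) :
    (∑ k, M k) *ᵥ v = ∑ k, (M k) *ᵥ v :=
  map_sum (Matrix.mulVec.addMonoidHomLeft v) M Finset.univ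

lemma dot_sum' {ι κ : Type} [Fintype ι] [Fintype κ] (v : ι → ℂ) (w : κ → ι → ℂ) :
    dotProduct v (∑ k, w k) = ∑ k, dotProduct v (w k) := by
  unfold dotProduct
  rw [Finset.sum_comm]
  apply Finset.sum_congr rfl
  intro i _
  rw [Finset.sum_apply, Finset.mul_sum]

lemma psd_sum {ι κ : Type} [Fintype ι] [Fintype κ] {M : κ → Matrix ι ι ℂ}
    (hM : ∀ k, (M k).PosSemidef) : (∑ k, M k).PosSemidef := by
  refine Matrix.PosSemidef.of_dotProduct_mulVec_nonneg ?_ ?_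
  · unfold Matrix.IsHermitian
    rw [Matrix.conjTranspose_sum]
    exact Finset.sum_congr rfl (fun k _ => (hM k).1)
  · intro v
    rw [sum_mulVec', dot_sum']
    exact Finset.sum_nonneg (fun k _ => (hM k).dotProduct_mulVec_nonneg v)

lemma psd_smul_real {ι : Type} [Fintype ι] {M : Matrix ι ι ℂ} (hM : M.PosSemidef)
    {r : ℝ} (hr : 0 ≤ r) : (((r : ℂ)) • M).PosSemidef := by
  refine Matrix.PosSemidef.of_dotProduct_mulVec_nonneg ?_ ?_
  · rw [Matrix.IsHermitian]
    funext a b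
    rw [Matrix.conjTranspose_apply, Matrix.smul_apply, Matrix.smul_apply, star_smul]
    rw [herm_entry hM.1]
    congr 1
    simp [Complex.ext_iff]
  · intro v
    rw [Matrix.smul_mulVec, dotProduct_smul]
    rw [smul_eq_mul]
    refine mul_nonneg ?_ (hM.dotProduct_mulVec_nonneg v)
    exact_mod_cast hr

lemma DepI_sum {κ : Type} [Fintype κ] (i : Fin n) (M : κ → Mat d n) :
    DepI i (∑ k, M k) = ∑ k, DepI i (M k) := by
  funext a b
  rw [Matrix.sum_apply, DepI_apply]
  have hpt : ptrace i (∑ k, M k) = ∑ k, ptrace i (M k) := by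
    funext p q
    rw [Matrix.sum_apply]
    unfold ptrace
    simp only [Matrix.sum_apply]
    rw [Finset.sum_comm]
  rw [hpt]
  rcases eq_or_ne (a i) (b i) with h | h
  · simp only [DepI_apply, if_pos h, Matrix.sum_apply, Finset.mul_sum]
  · simp only [DepI_apply, if_neg h, Matrix.sum_apply, Finset.mul_sum, mul_zero,
      Finset.sum_const_zero]

lemma psd_eq_sum_outer {M : Mat d n} (hM : M.PosSemidef) :
    ∃ x : Cfg d n → Cfg d n → ℂ, M = ∑ k, outer (x k) := by
  obtain ⟨B, hB⟩ : ∃ B : Mat d n, M = Bᴴ * B := by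
    open scoped MatrixOrder in
    obtain ⟨B, hB⟩ := CStarAlgebra.nonneg_iff_eq_star_mul_self.mp hM.nonneg
    exact ⟨B, hB⟩
  refine ⟨fun k a => (starRingEnd ℂ) (B k a), ?_⟩
  funext a b
  rw [hB, Matrix.mul_apply, Matrix.sum_apply]
  congr 1
  funext k
  rw [Matrix.conjTranspose_apply, outer]
  simp [mul_comm]

/-- The F-function of the Cauchy-Schwarz argument. -/
def Ffun (i : Fin n) (x v : Cfg d n → ℂ) (s u : Fin d) : ℂ :=
  ∑ β : {j : Fin n // j ≠ i} → Fin d, (starRingEnd ℂ) (x (ins i β s)) * v (ins i β u)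

lemma expand_quad (M : Mat d n) (v : Cfg d n → ℂ) :
    dotProduct (star v) (M *ᵥ v)
      = ∑ a : Cfg d n, ∑ b : Cfg d n, (starRingEnd ℂ) (v a) * M a b * v b := by
  rw [dotProduct]
  apply Finset.sum_congr rfl
  intro a _
  rw [Matrix.mulVec, dotProduct, Finset.mul_sum]
  apply Finset.sum_congr rfl
  intro b _
  simp only [Pi.star_apply, RCLike.star_def]
  ring

lemma form_outer (i : Fin n) (x v : Cfg d n → ℂ) :
    dotProduct (star v) ((outer x) *ᵥ v)
      = ((Complex.normSq (∑ s : Fin d, Ffun i x v s s) : ℝ) : ℂ) := by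
  rw [expand_quad]
  have : ∀ a b : Cfg d n, (starRingEnd ℂ) (v a) * (outer x) a b * v b
      = ((starRingEnd ℂ) (v a) * x a) * ((starRingEnd ℂ) (x b) * v b) := by
    intro a b; rw [outer]; ring
  simp only [this]
  rw [← Fintype.sum_mul_sum]
  have hg : ∑ a : Cfg d n, (starRingEnd ℂ) (v a) * x a
      = (starRingEnd ℂ) (∑ b : Cfg d n, (starRingEnd ℂ) (x b) * v b) := by
    rw [map_sum]
    apply Finset.sum_congr rfl
    intro b _
    simp [mul_comm]
  rw [hg]
  rw [show (∑ b : Cfg d n, (starRingEnd ℂ) (x b) * v b) = ∑ s : Fin d, Ffun i x v s s from by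
    rw [sum_cfg_eq i (fun b => (starRingEnd ℂ) (x b) * v b)]; rfl]
  rw [mul_comm, Complex.mul_conj]

lemma idT_ins (i : Fin n) (K : Matrix ({j : Fin n // j ≠ i} → Fin d) ({j : Fin n // j ≠ i} → Fin d) ℂ)
    (α β : {j : Fin n // j ≠ i} → Fin d) (u u' : Fin d) :
    idTensorAt i K (ins i α u) (ins i β u') = if u = u' then K α β else 0 := by
  unfold idTensorAt
  rw [ins_self, ins_self,
    show (fun j : {j : Fin n // j ≠ i} => ins i α u ↑j) = α from restr_ins i α u,
    show (fun j : {j : Fin n // j ≠ i} => ins i β u' ↑j) = β from restr_ins i β u']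

lemma form_idT (i : Fin n) (x v : Cfg d n → ℂ) :
    dotProduct (star v) ((idTensorAt i (ptrace i (outer x))) *ᵥ v)
      = ((∑ s : Fin d, ∑ u : Fin d, Complex.normSq (Ffun i x v s u) : ℝ) : ℂ) := by
  rw [expand_quad]
  calc
    ∑ a : Cfg d n, ∑ b : Cfg d n,
        (starRingEnd ℂ) (v a) * (idTensorAt i (ptrace i (outer x))) a b * v b
      = ∑ u : Fin d, ∑ α : {j : Fin n // j ≠ i} → Fin d, ∑ u' : Fin d,
          ∑ β : {j : Fin n // j ≠ i} → Fin d,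
          (starRingEnd ℂ) (v (ins i α u)) *
            (idTensorAt i (ptrace i (outer x))) (ins i α u) (ins i β u') * v (ins i β u') := by
        rw [sum_cfg_eq i]
        exact Finset.sum_congr rfl fun u _ => Finset.sum_congr rfl fun α _ =>
          sum_cfg_eq i _
    _ = ∑ u : Fin d, ∑ α : {j : Fin n // j ≠ i} → Fin d,
          ∑ β : {j : Fin n // j ≠ i} → Fin d,
          (starRingEnd ℂ) (v (ins i α u)) * (ptrace i (outer x)) α β * v (ins i β u) := by
        apply Finset.sum_congr rfl; intro u _
        apply Finset.sum_congr rfl; intro α _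
        rw [Finset.sum_comm]
        apply Finset.sum_congr rfl; intro β _
        rw [show (∑ u' : Fin d, (starRingEnd ℂ) (v (ins i α u)) *
            (idTensorAt i (ptrace i (outer x))) (ins i α u) (ins i β u') * v (ins i β u'))
            = ∑ u' : Fin d, if u = u' then
              (starRingEnd ℂ) (v (ins i α u)) * (ptrace i (outer x)) α β * v (ins i β u') else 0
            from Finset.sum_congr rfl fun u' _ => by
              rw [idT_ins]
              split <;> simp]
        rw [Finset.sum_ite_eq]
        simp
    _ = ∑ u : Fin d, ∑ α : {j : Fin n // j ≠ i} → Fin d,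
          ∑ β : {j : Fin n // j ≠ i} → Fin d, ∑ s : Fin d,
          ((x (ins i α s) * (starRingEnd ℂ) (v (ins i α u))) *
            ((starRingEnd ℂ) (x (ins i β s)) * v (ins i β u))) := by
        apply Finset.sum_congr rfl; intro u _
        apply Finset.sum_congr rfl; intro α _
        apply Finset.sum_congr rfl; intro β _
        unfold ptrace outer
        rw [Finset.mul_sum, Finset.sum_mul]
        apply Finset.sum_congr rfl; intro s _
        ring
    _ = ∑ u : Fin d, ∑ s : Fin d, ∑ α : {j : Fin n // j ≠ i} → Fin d,
          ∑ β : {j : Fin n // j ≠ i} → Fin d,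
          ((x (ins i α s) * (starRingEnd ℂ) (v (ins i α u))) *
            ((starRingEnd ℂ) (x (ins i β s)) * v (ins i β u))) := by
        apply Finset.sum_congr rfl; intro u _
        rw [show (∑ α : {j : Fin n // j ≠ i} → Fin d,
              ∑ β : {j : Fin n // j ≠ i} → Fin d, ∑ s : Fin d,
              ((x (ins i α s) * (starRingEnd ℂ) (v (ins i α u))) *
                ((starRingEnd ℂ) (x (ins i β s)) * v (ins i β u))))
            = ∑ α : {j : Fin n // j ≠ i} → Fin d, ∑ s : Fin d,
              ∑ β : {j : Fin n // j ≠ i} → Fin d,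
              ((x (ins i α s) * (starRingEnd ℂ) (v (ins i α u))) *
                ((starRingEnd ℂ) (x (ins i β s)) * v (ins i β u)))
            from Finset.sum_congr rfl fun α _ => Finset.sum_comm]
        exact Finset.sum_comm
    _ = ∑ u : Fin d, ∑ s : Fin d, (starRingEnd ℂ) (Ffun i x v s u) * Ffun i x v s u := by
        apply Finset.sum_congr rfl; intro u _
        apply Finset.sum_congr rfl; intro s _
        rw [← Fintype.sum_mul_sum]
        congr 1
        unfold Ffun
        rw [map_sum]
        apply Finset.sum_congr rfl; intro β _
        simp [mul_comm]
    _ = ((∑ s : Fin d, ∑ u : Fin d, Complex.normSq (Ffun i x v s u) : ℝ) : ℂ) := by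
        rw [Finset.sum_comm]
        push_cast
        apply Finset.sum_congr rfl; intro s _
        apply Finset.sum_congr rfl; intro u _
        rw [mul_comm, Complex.mul_conj]

lemma outer_psd (x : Cfg d n → ℂ) : (outer x).PosSemidef := by
  refine Matrix.PosSemidef.of_dotProduct_mulVec_nonneg ?_ ?_
  · unfold Matrix.IsHermitian
    funext a b
    rw [Matrix.conjTranspose_apply, outer, outer, star_mul']
    simp [mul_comm]
  · intro v
    rw [expand_quad]
    have : ∀ a b : Cfg d n, (starRingEnd ℂ) (v a) * (outer x) a b * v b
        = ((starRingEnd ℂ) (v a) * x a) * ((starRingEnd ℂ) (x b) * v b) := by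
      intro a b; rw [outer]; ring
    simp only [this]
    rw [← Fintype.sum_mul_sum]
    have hg : ∑ a : Cfg d n, (starRingEnd ℂ) (v a) * x a
        = (starRingEnd ℂ) (∑ b : Cfg d n, (starRingEnd ℂ) (x b) * v b) := by
      rw [map_sum]
      apply Finset.sum_congr rfl
      intro b _
      simp [mul_comm]
    rw [hg, mul_comm, Complex.mul_conj]
    exact_mod_cast Complex.normSq_nonneg _

/-- Key operator inequality: `D_i M ≥ M / d²` for `M ⪰ 0`. -/
lemma DepI_sub_psd (hd : 0 < d) (i : Fin n) {M : Mat d n} (hM : M.PosSemidef) :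
    (DepI i M - ((((d:ℝ)^2)⁻¹ : ℝ) : ℂ) • M).PosSemidef := by
  obtain ⟨x, hx⟩ := psd_eq_sum_outer hM
  rw [hx, DepI_sum, Finset.smul_sum, ← Finset.sum_sub_distrib]
  apply psd_sum
  intro k
  refine Matrix.PosSemidef.of_dotProduct_mulVec_nonneg ?_ ?_
  · exact (DepI_isHermitian (outer_psd (x k)).1).sub
      (psd_smul_real (outer_psd (x k)) (by positivity)).1
  · intro v
    rw [Matrix.sub_mulVec, dotProduct_sub, Matrix.smul_mulVec,
      dotProduct_smul]
    have e1 : dotProduct (star v) ((DepI i (outer (x k))) *ᵥ v)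
        = ((((d:ℝ)⁻¹) * ∑ s : Fin d, ∑ u : Fin d,
            Complex.normSq (Ffun i (x k) v s u) : ℝ) : ℂ) := by
      rw [DepI, Matrix.smul_mulVec, dotProduct_smul, form_idT]
      push_cast
      rfl
    have e2 := form_outer i (x k) v
    rw [e1, e2, smul_eq_mul]
    rw [show ((((d:ℝ)^2)⁻¹ : ℝ) : ℂ) *
        ((Complex.normSq (∑ s : Fin d, Ffun i (x k) v s s) : ℝ) : ℂ)
        = ((((d:ℝ)^2)⁻¹ * Complex.normSq (∑ s : Fin d, Ffun i (x k) v s s) : ℝ) : ℂ) from by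
      push_cast; ring]
    rw [← Complex.ofReal_sub]
    rw [Complex.zero_le_real]
    -- real inequality
    set F := Ffun i (x k) v with hF
    set Sig2 : ℝ := ∑ s : Fin d, ∑ u : Fin d, Complex.normSq (F s u) with hS2
    have hd' : (0:ℝ) < d := by exact_mod_cast hd
    have h1 : ‖∑ s : Fin d, F s s‖ ≤ ∑ s : Fin d, ‖F s s‖ := by
      simpa using norm_sum_le (Finset.univ : Finset (Fin d)) (fun s => F s s)
    have h2 : (∑ s : Fin d, ‖F s s‖)^2
        ≤ (d:ℝ) * ∑ s : Fin d, (‖F s s‖)^2 := by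
      have := Finset.sum_mul_sq_le_sq_mul_sq (Finset.univ : Finset (Fin d))
        (fun _ => (1:ℝ)) (fun s => ‖F s s‖)
      simpa [Finset.card_univ] using this
    have h3 : ∑ s : Fin d, (‖F s s‖)^2 ≤ Sig2 := by
      rw [hS2]
      apply Finset.sum_le_sum
      intro s _
      rw [show (‖F s s‖)^2 = Complex.normSq (F s s) from Complex.sq_norm _]
      exact Finset.single_le_sum (f := fun u => Complex.normSq (F s u))
        (fun u _ => Complex.normSq_nonneg _) (Finset.mem_univ s)
    have key : Complex.normSq (∑ s : Fin d, F s s) ≤ (d:ℝ) * Sig2 := by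
      rw [← Complex.sq_norm]
      calc (‖∑ s : Fin d, F s s‖)^2
          ≤ (∑ s : Fin d, ‖F s s‖)^2 := by
            apply pow_le_pow_left₀ (norm_nonneg _) h1
        _ ≤ (d:ℝ) * ∑ s : Fin d, (‖F s s‖)^2 := h2
        _ ≤ (d:ℝ) * Sig2 := by
            exact mul_le_mul_of_nonneg_left h3 (le_of_lt hd')
    have hSnn : 0 ≤ Sig2 := Finset.sum_nonneg fun s _ =>
      Finset.sum_nonneg fun u _ => Complex.normSq_nonneg _
    have : ((d:ℝ)^2)⁻¹ * Complex.normSq (∑ s : Fin d, F s s) ≤ (d:ℝ)⁻¹ * Sig2 := by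
      have h4 : ((d:ℝ)^2)⁻¹ * Complex.normSq (∑ s : Fin d, F s s)
          ≤ ((d:ℝ)^2)⁻¹ * ((d:ℝ) * Sig2) :=
        mul_le_mul_of_nonneg_left key (by positivity)
      calc ((d:ℝ)^2)⁻¹ * Complex.normSq (∑ s : Fin d, F s s)
          ≤ ((d:ℝ)^2)⁻¹ * ((d:ℝ) * Sig2) := h4
        _ = (d:ℝ)⁻¹ * Sig2 := by
            field_simp
    linarith

lemma DepI_psd (hd : 0 < d) (i : Fin n) {M : Mat d n} (hM : M.PosSemidef) :
    (DepI i M).PosSemidef := by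
  have h1 := DepI_sub_psd hd i hM
  have h2 := psd_smul_real (r := (((d:ℝ)^2)⁻¹ : ℝ)) hM (by positivity)
  have := psd_add h1 h2
  simpa using this


/-- Empty partial trace determines the matrix. -/
lemma ptraceSet_empty_inj {X Y : Mat d n}
    (h : ptraceSet (∅ : Finset (Fin n)) X = ptraceSet (∅ : Finset (Fin n)) Y) : X = Y := by
  funext a b
  have ha : ∀ x : Cfg d n, insSet (∅ : Finset (Fin n)) (fun j => x j) default = x := by
    intro x
    funext j
    simp [insSet]
  have := congrFun (congrFun h (fun j => a j)) (fun j => b j)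
  unfold ptraceSet at this
  rw [Finset.sum_eq_single default (fun t _ h' => absurd (Subsingleton.elim t default) h')
      (fun h' => absurd (Finset.mem_univ _) h'),
    Finset.sum_eq_single default (fun t _ h' => absurd (Subsingleton.elim t default) h')
      (fun h' => absurd (Finset.mem_univ _) h')] at this
  rwa [ha a, ha b] at this

/-- Splitting of configurations on `insert i J`. -/
def eSplit (i : Fin n) (J : Finset (Fin n)) (hi : i ∉ J) :
    ({j : Fin n // j ∈ insert i J} → Fin d) ≃ Fin d × ({j : Fin n // j ∈ J} → Fin d) where
  toFun t := (t ⟨i, Finset.mem_insert_self i J⟩,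
    fun j => t ⟨j, Finset.mem_insert_of_mem j.2⟩)
  invFun p := fun j => if h : (j : Fin n) ∈ J then p.2 ⟨j, h⟩ else p.1
  left_inv t := by
    funext j
    rcases j with ⟨j, hj⟩
    by_cases h : j ∈ J
    · simp [h]
    · have : j = i := by
        rcases Finset.mem_insert.mp hj with h' | h'
        · exact h'
        · exact absurd h' h
      subst this
      simp [h]
  right_inv p := by
    rcases p with ⟨u, s⟩
    refine Prod.ext ?_ ?_
    · simp [hi]
    · funext j
      simp [j.2]

lemma ptraceSet_DepI (i : Fin n) (J : Finset (Fin n)) (hi : i ∉ J) (X : Mat d n)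
    (a b : {j : Fin n // j ∉ J} → Fin d) :
    ptraceSet J (DepI i X) a b
      = if a ⟨i, hi⟩ = b ⟨i, hi⟩ then
          (d:ℂ)⁻¹ * ptraceSet (insert i J) X
            (fun j => a ⟨j, fun hj => j.2 (Finset.mem_insert_of_mem hj)⟩)
            (fun j => b ⟨j, fun hj => j.2 (Finset.mem_insert_of_mem hj)⟩)
        else 0 := by
  unfold ptraceSet
  have hins_i : ∀ (c : {j : Fin n // j ∉ J} → Fin d) (s : {j : Fin n // j ∈ J} → Fin d),
      insSet J c s i = c ⟨i, hi⟩ := by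
    intro c s
    simp [insSet, hi]
  have key : ∀ (c : {j : Fin n // j ∉ J} → Fin d) (s : {j : Fin n // j ∈ J} → Fin d) (u : Fin d),
      ins i (restr i (insSet J c s)) u
        = insSet (insert i J) (fun j => c ⟨j, fun hj => j.2 (Finset.mem_insert_of_mem hj)⟩)
            ((eSplit i J hi).symm (u, s)) := by
    intro c s u
    funext j
    rcases eq_or_ne j i with h | h
    · subst h
      rw [show ins j (restr j (insSet J c s)) u j = u from by simp [ins]]
      rw [insSet]
      rw [dif_pos (Finset.mem_insert_self j J)]
      show u = (eSplit j J hi).symm (u, s) ⟨j, _⟩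
      simp [eSplit, hi]
    · rw [show ins i (restr i (insSet J c s)) u j = insSet J c s j from by
        simp [ins, restr, h]]
      by_cases hj : j ∈ J
      · rw [insSet, dif_pos hj, insSet, dif_pos (Finset.mem_insert_of_mem hj)]
        show s _ = (eSplit i J hi).symm (u, s) ⟨j, _⟩
        simp [eSplit, hj]
      · rw [insSet, dif_neg hj, insSet]
        rw [dif_neg (by
          intro hmem
          rcases Finset.mem_insert.mp hmem with h' | h'
          · exact h h'
          · exact hj h')]
  rcases eq_or_ne (a ⟨i, hi⟩) (b ⟨i, hi⟩) with h | h
  · rw [if_pos h]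
    have : ∀ s : {j : Fin n // j ∈ J} → Fin d,
        DepI i X (insSet J a s) (insSet J b s)
          = (d:ℂ)⁻¹ * ∑ u : Fin d, X (ins i (restr i (insSet J a s)) u)
              (ins i (restr i (insSet J b s)) u) := by
      intro s
      rw [DepI_apply, hins_i, hins_i, if_pos h]
      rfl
    rw [Finset.sum_congr rfl (fun s _ => this s), ← Finset.mul_sum]
    congr 1
    rw [show (∑ t : {j : Fin n // j ∈ insert i J} → Fin d,
        X (insSet (insert i J) _ t) (insSet (insert i J) _ t))
        = ∑ p : Fin d × ({j : Fin n // j ∈ J} → Fin d),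
            X (insSet (insert i J) (fun j => a ⟨j, fun hj => j.2 (Finset.mem_insert_of_mem hj)⟩)
                ((eSplit i J hi).symm p))
              (insSet (insert i J) (fun j => b ⟨j, fun hj => j.2 (Finset.mem_insert_of_mem hj)⟩)
                ((eSplit i J hi).symm p))
      from (Equiv.sum_comp (eSplit i J hi).symm _).symm]
    rw [Fintype.sum_prod_type]
    conv_rhs => rw [Finset.sum_comm]
    apply Finset.sum_congr rfl; intro s _
    apply Finset.sum_congr rfl; intro u _
    rw [key a s u, key b s u]
  · rw [if_neg h]
    apply Finset.sum_eq_zero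
    intro s _
    rw [DepI_apply, hins_i, hins_i, if_neg h, mul_zero]


lemma ptrace_add' (i : Fin n) (X Y : Mat d n) :
    ptrace i (X + Y) = ptrace i X + ptrace i Y := by
  funext a b
  simp [ptrace, Finset.sum_add_distrib]

lemma isState_DepI (hd : 0 < d) (i : Fin n) {τ : Mat d n} (hτ : IsState τ) :
    IsState (DepI i τ) :=
  ⟨DepI_psd hd i hτ.1, by rw [trace_DepI hd.ne' i, hτ.2]⟩

lemma herm_state_sub_DepI {τ : Mat d n} (hτ : IsState τ) (i : Fin n) :
    (τ - DepI i τ).IsHermitian :=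
  hτ.1.1.sub (DepI_isHermitian hτ.1.1)

lemma traceNorm_state_sub_DepI (hd2 : 2 ≤ d) {τ : Mat d n} (hτ : IsState τ) (i : Fin n) :
    traceNorm (τ - DepI i τ) ≤ 2 * (((d:ℝ)^2 - 1) / (d:ℝ)^2) := by
  have hd0 : 0 < d := by omega
  have hdR : (0:ℝ) < (d:ℝ) := by exact_mod_cast hd0
  have h2 : (0:ℝ) < (d:ℝ)^2 := by positivity
  have hd1 : (1:ℝ) ≤ (d:ℝ) := by exact_mod_cast hd0
  have h1 : (1:ℝ) ≤ (d:ℝ)^2 := by nlinarith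
  have hx : (0:ℝ) ≤ 1 - ((d:ℝ)^2)⁻¹ := by
    have : (1:ℝ)/(d:ℝ)^2 ≤ 1 := (div_le_one h2).mpr h1
    rw [← one_div]
    linarith
  set P : Mat d n := (((1 - ((d:ℝ)^2)⁻¹ : ℝ)) : ℂ) • τ with hPdef
  have hZherm := herm_state_sub_DepI hτ i
  have hZ0 : (τ - DepI i τ).trace = 0 := by
    rw [Matrix.trace_sub, trace_DepI hd0.ne' i, sub_self]
  have hPpsd : P.PosSemidef := psd_smul_real hτ.1 hx
  have hPZ : (P - (τ - DepI i τ)).PosSemidef := by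
    have e : P - (τ - DepI i τ) = DepI i τ - ((((d:ℝ)^2)⁻¹ : ℝ) : ℂ) • τ := by
      rw [hPdef]
      rw [show (((1 - ((d:ℝ)^2)⁻¹ : ℝ)) : ℂ) = 1 - ((((d:ℝ)^2)⁻¹ : ℝ) : ℂ) from by push_cast; ring]
      rw [sub_smul, one_smul]
      abel
    rw [e]
    exact DepI_sub_psd hd0 i hτ.1
  have hmain := traceNorm_le_two_mul_trace hZherm hZ0 hPpsd hPZ
  have hPtr : P.trace.re = 1 - ((d:ℝ)^2)⁻¹ := by
    rw [hPdef, Matrix.trace_smul, hτ.2, smul_eq_mul, mul_one]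
    exact Complex.ofReal_re _
  rw [hPtr] at hmain
  calc traceNorm (τ - DepI i τ) ≤ 2 * (1 - ((d:ℝ)^2)⁻¹) := hmain
    _ = 2 * (((d:ℝ)^2 - 1) / (d:ℝ)^2) := by field_simp



/-- Main decomposition lemma, by induction on `I`. -/
lemma decomp (hd2 : 2 ≤ d) (I : Finset (Fin n)) :
    ∀ τ₁ τ₂ : Mat d n, IsState τ₁ → IsState τ₂ →
      ptraceSet I τ₁ = ptraceSet I τ₂ →
      ∃ Y : Fin n → Mat d n, (∀ i, (Y i).IsHermitian) ∧ (∀ i, ptrace i (Y i) = 0) ∧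
        τ₁ - τ₂ = ∑ i, Y i ∧
        ∑ i, traceNorm (Y i) ≤ (I.card : ℝ) * (4 * (((d:ℝ)^2 - 1) / (d:ℝ)^2)) := by
  have hd0 : 0 < d := lt_of_lt_of_le (by norm_num) hd2
  have hc : 0 ≤ (((d:ℝ)^2 - 1) / (d:ℝ)^2) := by
    have : (1:ℝ) ≤ (d:ℝ)^2 := by
      have : (1:ℝ) ≤ (d:ℝ) := by exact_mod_cast hd0
      nlinarith
    have h2 : (0:ℝ) < (d:ℝ)^2 := by positivity
    apply div_nonneg <;> linarith
  induction I using Finset.induction_on with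
  | empty =>
      intro τ₁ τ₂ h1 h2 h
      refine ⟨fun _ => 0, fun i => Matrix.isHermitian_zero, fun i => ?_, ?_, ?_⟩
      · funext a b; simp [ptrace]
      · rw [ptraceSet_empty_inj h]; simp
      · simp [traceNorm_zero]
  | @insert i J hi IH =>
      intro τ₁ τ₂ h1 h2 hpt
      have h1' := isState_DepI hd0 i h1
      have h2' := isState_DepI hd0 i h2
      have hpt' : ptraceSet J (DepI i τ₁) = ptraceSet J (DepI i τ₂) := by
        funext a b
        rw [ptraceSet_DepI i J hi, ptraceSet_DepI i J hi, hpt]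
      obtain ⟨Y, hH, hP, hSum, hN⟩ := IH (DepI i τ₁) (DepI i τ₂) h1' h2' hpt'
      set Y0 : Mat d n := (τ₁ - DepI i τ₁) - (τ₂ - DepI i τ₂) with hY0
      have hY0herm : Y0.IsHermitian :=
        (herm_state_sub_DepI h1 i).sub (herm_state_sub_DepI h2 i)
      have hY0pt : ptrace i Y0 = 0 := by
        rw [hY0, ptrace_sub, ptrace_sub, ptrace_sub,
          ptrace_DepI hd0.ne' i, ptrace_DepI hd0.ne' i]
        simp
      have hY0norm : traceNorm Y0 ≤ 4 * (((d:ℝ)^2 - 1) / (d:ℝ)^2) := by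
        calc traceNorm Y0
            ≤ traceNorm (τ₁ - DepI i τ₁) + traceNorm (τ₂ - DepI i τ₂) :=
              traceNorm_sub_le (herm_state_sub_DepI h1 i) (herm_state_sub_DepI h2 i)
          _ ≤ 2 * (((d:ℝ)^2 - 1) / (d:ℝ)^2) + 2 * (((d:ℝ)^2 - 1) / (d:ℝ)^2) :=
              add_le_add (traceNorm_state_sub_DepI hd2 h1 i) (traceNorm_state_sub_DepI hd2 h2 i)
          _ = 4 * (((d:ℝ)^2 - 1) / (d:ℝ)^2) := by ring
      refine ⟨Function.update Y i (Y i + Y0), ?_, ?_, ?_, ?_⟩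
      · intro j
        rcases eq_or_ne j i with h | h
        · subst h; rw [Function.update_self]; exact (hH j).add hY0herm
        · rw [Function.update_of_ne h]; exact hH j
      · intro j
        rcases eq_or_ne j i with h | h
        · subst h; rw [Function.update_self, ptrace_add', hP j, hY0pt, add_zero]
        · rw [Function.update_of_ne h]; exact hP j
      · rw [Finset.sum_update_of_mem (Finset.mem_univ i)]
        have hsplit : ∑ j, Y j = Y i + ∑ j ∈ Finset.univ \ {i}, Y j :=
          Finset.sum_eq_add_sum_sdiff_singleton_of_mem (Finset.mem_univ i) _
        have h' : DepI i τ₁ - DepI i τ₂ = Y i + ∑ j ∈ Finset.univ \ {i}, Y j := by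
          rw [hSum, hsplit]
        have h'' : τ₁ - τ₂ = Y0 + (DepI i τ₁ - DepI i τ₂) := by rw [hY0]; abel
        rw [h'', h']
        abel
      · have hcongr : ∀ j, traceNorm (Function.update Y i (Y i + Y0) j)
            = Function.update (fun j => traceNorm (Y j)) i (traceNorm (Y i + Y0)) j := by
          intro j
          rcases eq_or_ne j i with h | h
          · subst h; simp
          · simp [Function.update_of_ne h]
        rw [Finset.sum_congr rfl (fun j _ => hcongr j),
          Finset.sum_update_of_mem (Finset.mem_univ i)]
        have hsplit2 : ∑ j, traceNorm (Y j)
            = traceNorm (Y i) + ∑ j ∈ Finset.univ \ {i}, traceNorm (Y j) :=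
          Finset.sum_eq_add_sum_sdiff_singleton_of_mem (Finset.mem_univ i) _
        have htri : traceNorm (Y i + Y0) ≤ traceNorm (Y i) + traceNorm Y0 :=
          traceNorm_add_le (hH i) hY0herm
        have hcard : ((insert i J).card : ℝ) = (J.card : ℝ) + 1 := by
          rw [Finset.card_insert_of_notMem hi]; push_cast; ring
        rw [hcard]
        have : ∑ j ∈ Finset.univ \ {i}, traceNorm (Y j)
            = ∑ j, traceNorm (Y j) - traceNorm (Y i) := by rw [hsplit2]; ring
        rw [this]
        linarith



@[simp] lemma insSet_out (I : Finset (Fin n)) (a : {j : Fin n // j ∉ I} → Fin d)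
    (s : {j : Fin n // j ∈ I} → Fin d) :
    (fun j : {j : Fin n // j ∉ I} => insSet I a s ↑j) = a := by
  funext j
  simp [insSet, j.2]

@[simp] lemma insSet_in (I : Finset (Fin n)) (a : {j : Fin n // j ∉ I} → Fin d)
    (s : {j : Fin n // j ∈ I} → Fin d) :
    (fun j : {j : Fin n // j ∈ I} => insSet I a s ↑j) = s := by
  funext j
  simp [insSet, j.2]

def eSet (I : Finset (Fin n)) :
    Cfg d n ≃ ({j : Fin n // j ∈ I} → Fin d) × ({j : Fin n // j ∉ I} → Fin d) where
  toFun x := (fun j => x j, fun j => x j)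
  invFun p := insSet I p.2 p.1
  left_inv x := by
    funext j
    by_cases h : j ∈ I <;> simp [insSet, h]
  right_inv p := by
    rcases p with ⟨s, a⟩
    exact Prod.ext (insSet_in I a s) (insSet_out I a s)

lemma applyOn_insSet (I : Finset (Fin n))
    (φ : Matrix ({j : Fin n // j ∈ I} → Fin d) ({j : Fin n // j ∈ I} → Fin d) ℂ →
         Matrix ({j : Fin n // j ∈ I} → Fin d) ({j : Fin n // j ∈ I} → Fin d) ℂ)
    (X : Mat d n) (a b : {j : Fin n // j ∉ I} → Fin d)
    (s t : {j : Fin n // j ∈ I} → Fin d) :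
    applyOn I φ X (insSet I a s) (insSet I b t)
      = φ (fun s' t' => X (insSet I a s') (insSet I b t')) s t := by
  unfold applyOn
  rw [insSet_out, insSet_out, insSet_in, insSet_in]

lemma ptraceSet_applyOn (I : Finset (Fin n))
    (φ : Matrix ({j : Fin n // j ∈ I} → Fin d) ({j : Fin n // j ∈ I} → Fin d) ℂ →ₗ[ℂ]
         Matrix ({j : Fin n // j ∈ I} → Fin d) ({j : Fin n // j ∈ I} → Fin d) ℂ)
    (hTP : ∀ M, (φ M).trace = M.trace) (ρ : Mat d n) :
    ptraceSet I (applyOn I (fun M => φ M) ρ) = ptraceSet I ρ := by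
  funext a b
  unfold ptraceSet
  rw [show (∑ s : {j : Fin n // j ∈ I} → Fin d,
      applyOn I (fun M => φ M) ρ (insSet I a s) (insSet I b s))
      = ∑ s : {j : Fin n // j ∈ I} → Fin d,
        φ (fun s' t' => ρ (insSet I a s') (insSet I b t')) s s from
    Finset.sum_congr rfl fun s _ => applyOn_insSet I _ ρ a b s s]
  have := hTP (fun s' t' => ρ (insSet I a s') (insSet I b t'))
  simp only [Matrix.trace] at this
  exact this

lemma trace_applyOn (I : Finset (Fin n))
    (φ : Matrix ({j : Fin n // j ∈ I} → Fin d) ({j : Fin n // j ∈ I} → Fin d) ℂ →ₗ[ℂ]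
         Matrix ({j : Fin n // j ∈ I} → Fin d) ({j : Fin n // j ∈ I} → Fin d) ℂ)
    (hTP : ∀ M, (φ M).trace = M.trace) (ρ : Mat d n) :
    (applyOn I (fun M => φ M) ρ).trace = ρ.trace := by
  have key : ∀ X : Mat d n, X.trace
      = ∑ a : {j : Fin n // j ∉ I} → Fin d, ∑ s : {j : Fin n // j ∈ I} → Fin d,
          X (insSet I a s) (insSet I a s) := by
    intro X
    rw [Matrix.trace, show (∑ x : Cfg d n, X.diag x)
      = ∑ p : ({j : Fin n // j ∈ I} → Fin d) × ({j : Fin n // j ∉ I} → Fin d),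
          X.diag ((eSet I).symm p) from (Equiv.sum_comp (eSet I).symm _).symm,
      Fintype.sum_prod_type]
    rw [Finset.sum_comm]
    rfl
  rw [key, key ρ]
  apply Finset.sum_congr rfl
  intro a _
  rw [show (∑ s : {j : Fin n // j ∈ I} → Fin d,
      applyOn I (fun M => φ M) ρ (insSet I a s) (insSet I a s))
      = ∑ s : {j : Fin n // j ∈ I} → Fin d,
        φ (fun s' t' => ρ (insSet I a s') (insSet I a t')) s s from
    Finset.sum_congr rfl fun s _ => applyOn_insSet I _ ρ a a s s]
  have := hTP (fun s' t' => ρ (insSet I a s') (insSet I a t'))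
  simp only [Matrix.trace] at this
  exact this

lemma psd_applyOn (I : Finset (Fin n))
    (φ : Matrix ({j : Fin n // j ∈ I} → Fin d) ({j : Fin n // j ∈ I} → Fin d) ℂ →ₗ[ℂ]
         Matrix ({j : Fin n // j ∈ I} → Fin d) ({j : Fin n // j ∈ I} → Fin d) ℂ)
    (hCP : ∀ (k : ℕ) (M : Matrix (({j : Fin n // j ∈ I} → Fin d) × Fin k)
        (({j : Fin n // j ∈ I} → Fin d) × Fin k) ℂ), M.PosSemidef →
      (extendMap (fun N => φ N) M).PosSemidef)
    {ρ : Mat d n} (hρ : ρ.PosSemidef) :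
    (applyOn I (fun M => φ M) ρ).PosSemidef := by
  classical
  set R := ({j : Fin n // j ∉ I} → Fin d)
  set k := Fintype.card R
  set eR : R ≃ Fin k := Fintype.equivFin R
  set e3 : Cfg d n ≃ (({j : Fin n // j ∈ I} → Fin d) × Fin k) :=
    (eSet I).trans (Equiv.prodCongr (Equiv.refl _) eR) with he3
  set M := ρ.submatrix e3.symm e3.symm with hM
  have hMpsd : M.PosSemidef := hρ.submatrix _
  have hext := hCP k M hMpsd
  have hEq : applyOn I (fun M => φ M) ρ = (extendMap (fun N => φ N) M).submatrix e3 e3 := by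
    funext c c'
    rw [Matrix.submatrix_apply]
    unfold extendMap
    have H : (fun (a a' : {j : Fin n // j ∈ I} → Fin d) => M (a, (e3 c).2) (a', (e3 c').2))
        = fun a a' => ρ (insSet I (fun j => c ↑j) a) (insSet I (fun j => c' ↑j) a') := by
      funext a a'
      rw [hM, Matrix.submatrix_apply]
      congr 1
      · show (eSet I).symm ((Equiv.prodCongr (Equiv.refl _) eR).symm
          (a, (e3 c).2)) = _
        rw [he3]
        simp [eSet, Equiv.prodCongr]
      · show (eSet I).symm ((Equiv.prodCongr (Equiv.refl _) eR).symm
          (a', (e3 c').2)) = _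
        rw [he3]
        simp [eSet, Equiv.prodCongr]
    rw [H]
    rfl
  rw [hEq]
  exact hext.submatrix _


end AuxProofs

theorem stmt5 {d n : ℕ} (hd : 2 ≤ d) (hn : 1 ≤ n) (k : ℕ)
    (I : Finset (Fin n)) (hIk : I.card ≤ k)
    (φ : Matrix ({j : Fin n // j ∈ I} → Fin d) ({j : Fin n // j ∈ I} → Fin d) ℂ →ₗ[ℂ]
         Matrix ({j : Fin n // j ∈ I} → Fin d) ({j : Fin n // j ∈ I} → Fin d) ℂ)
    (hφ : IsCPTP φ) (ρ : Mat d n) (hρ : IsState ρ) :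
    W1 (applyOn I (fun M => φ M) ρ - ρ) ≤
      2 * (k : ℝ) * (((d : ℝ) ^ 2 - 1) / (d : ℝ) ^ 2) := by
  have hd0 : 0 < d := by omega
  set τ1 : Mat d n := applyOn I (fun M => φ M) ρ with hτ1
  have hstate1 : IsState τ1 := ⟨psd_applyOn I φ hφ.1 hρ.1,
    by rw [hτ1, trace_applyOn I φ hφ.2 ρ, hρ.2]⟩
  have hpt : ptraceSet I τ1 = ptraceSet I ρ := ptraceSet_applyOn I φ hφ.2 ρ
  obtain ⟨Y, hH, hP, hSum, hN⟩ := decomp hd I τ1 ρ hstate1 hρ hpt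
  have hmem : (1/2 : ℝ) * ∑ i, traceNorm (Y i) ∈ W1Set (τ1 - ρ) := ⟨Y, hH, hP, hSum, rfl⟩
  have hbdd : BddBelow (W1Set (τ1 - ρ)) := by
    refine ⟨0, fun r hr => ?_⟩
    obtain ⟨Y', _, _, _, hre⟩ := hr
    rw [hre]
    have : 0 ≤ ∑ i, traceNorm (Y' i) := Finset.sum_nonneg fun i _ => traceNorm_nonneg _
    linarith
  have hW1 : W1 (τ1 - ρ) ≤ (1/2 : ℝ) * ∑ i, traceNorm (Y i) := csInf_le hbdd hmem
  have hc : 0 ≤ ((d:ℝ)^2 - 1) / (d:ℝ)^2 := by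
    have hdR : (1:ℝ) ≤ (d:ℝ) := by exact_mod_cast hd0
    have h2 : (0:ℝ) < (d:ℝ)^2 := by positivity
    apply div_nonneg _ (le_of_lt h2)
    nlinarith
  have hIk' : (I.card : ℝ) ≤ (k : ℝ) := by exact_mod_cast hIk
  calc W1 (τ1 - ρ) ≤ (1/2 : ℝ) * ∑ i, traceNorm (Y i) := hW1
    _ ≤ (1/2 : ℝ) * ((I.card : ℝ) * (4 * (((d:ℝ)^2 - 1) / (d:ℝ)^2))) := by linarith
    _ = 2 * (I.card : ℝ) * (((d:ℝ)^2 - 1) / (d:ℝ)^2) := by ring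
    _ ≤ 2 * (k : ℝ) * (((d:ℝ)^2 - 1) / (d:ℝ)^2) := by
        apply mul_le_mul_of_nonneg_right _ hc
        linarith


end QW1
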